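/- (Lemma 3.6) Given a neutral trajectory datum, Σ_{j=1}^n δh_j(t) v_j(t) = 0 for every t ≥ 0; in particular Σ_{j=1}^n δh_j(0) v_j(0) = 0. -/

import Mathlib

open Matrix Filter Set

/-- The collision matrix `R_i` acting on coordinates `i` and `i+1` (0-based),
with 2×2 block `((γ, 1−γ), (1+γ, −γ))`, and agreeing with the identity elsewhere. -/
def collMat (n : ℕ) (i : ℕ) (γ : ℝ) : Matrix (Fin n) (Fin n) ℝ :=
  Matrix.of fun j k =>
    if j.val = i ∧ k.val = i then γ
    else if j.val = i ∧ k.val = i + 1 then 1 - γ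
    else if j.val = i + 1 ∧ k.val = i then 1 + γ
    else if j.val = i + 1 ∧ k.val = i + 1 then -γ
    else if j = k then 1 else 0

/-- split a sum over `Fin n` at two distinct indices -/
lemma sum_split {n : ℕ} (i0 i1 : Fin n) (hne : i0 ≠ i1) (f g : Fin n → ℝ)
    (h2 : f i0 + f i1 = g i0 + g i1)
    (h : ∀ j, j ≠ i0 → j ≠ i1 → f j = g j) : ∑ j, f j = ∑ j, g j := by
  classical
  rw [← Finset.add_sum_erase _ f (Finset.mem_univ i0),
      ← Finset.add_sum_erase _ f (Finset.mem_erase.2 ⟨hne.symm, Finset.mem_univ i1⟩),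
      ← Finset.add_sum_erase _ g (Finset.mem_univ i0),
      ← Finset.add_sum_erase _ g (Finset.mem_erase.2 ⟨hne.symm, Finset.mem_univ i1⟩),
      ← add_assoc, ← add_assoc, h2]
  congr 1
  refine Finset.sum_congr rfl fun j hj => ?_
  simp only [Finset.mem_erase] at hj
  exact h j hj.2.1 hj.1

lemma collMat_mulVec {n i : ℕ} (hi : i + 1 < n) (γ : ℝ) (y : Fin n → ℝ) (j : Fin n) :
    (collMat n i γ *ᵥ y) j =
      if j.val = i then γ * y ⟨i, Nat.lt_of_succ_lt hi⟩ + (1 - γ) * y ⟨i + 1, hi⟩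
      else if j.val = i + 1 then (1 + γ) * y ⟨i, Nat.lt_of_succ_lt hi⟩ + (-γ) * y ⟨i + 1, hi⟩
      else y j := by
  classical
  set i0 : Fin n := ⟨i, Nat.lt_of_succ_lt hi⟩
  set i1 : Fin n := ⟨i + 1, hi⟩
  have hne : i0 ≠ i1 := by simp [i0, i1, Fin.ext_iff]
  have hv : ∀ k : Fin n, k ≠ i0 → k ≠ i1 → collMat n i γ j k * y k =
      (if j = k then 1 else 0) * y k := by
    intro k hk0 hk1
    have h0 : ¬ (k : ℕ) = i := fun h => hk0 (Fin.ext h)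
    have h1 : ¬ (k : ℕ) = i + 1 := fun h => hk1 (Fin.ext h)
    simp [collMat, h0, h1]
  have hsum : (collMat n i γ *ᵥ y) j =
      collMat n i γ j i0 * y i0 + collMat n i γ j i1 * y i1 +
        ∑ k ∈ (Finset.univ.erase i0).erase i1, (if j = k then 1 else 0) * y k := by
    rw [mulVec, dotProduct,
      ← Finset.add_sum_erase _ _ (Finset.mem_univ i0),
      ← Finset.add_sum_erase _ _ (Finset.mem_erase.2 ⟨hne.symm, Finset.mem_univ i1⟩),
      ← add_assoc]
    congr 1
    refine Finset.sum_congr rfl fun k hk => ?_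
    simp only [Finset.mem_erase] at hk
    exact hv k hk.2.1 hk.1
  rw [hsum]
  have hi10 : ¬ (i + 1 = i) := Nat.succ_ne_self i
  by_cases hj0 : (j : ℕ) = i
  · have hz : ∑ k ∈ (Finset.univ.erase i0).erase i1, (if j = k then 1 else 0) * y k = 0 := by
      refine Finset.sum_eq_zero fun k hk => ?_
      simp only [Finset.mem_erase] at hk
      have hjk : j ≠ k := fun h => hk.2.1 (h.symm.trans (Fin.ext hj0))
      simp [hjk]
    have e0 : collMat n i γ j i0 = γ := by simp [collMat, hj0, i0]
    have e1 : collMat n i γ j i1 = 1 - γ := by simp [collMat, hj0, i1, hi10]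
    rw [e0, e1, hz, if_pos hj0, add_zero]
  · by_cases hj1 : (j : ℕ) = i + 1
    · have hz : ∑ k ∈ (Finset.univ.erase i0).erase i1, (if j = k then 1 else 0) * y k = 0 := by
        refine Finset.sum_eq_zero fun k hk => ?_
        simp only [Finset.mem_erase] at hk
        have hjk : j ≠ k := fun h => hk.1 (h.symm.trans (Fin.ext hj1))
        simp [hjk]
      have e0 : collMat n i γ j i0 = 1 + γ := by simp [collMat, hj0, hj1, i0, hi10]
      have e1 : collMat n i γ j i1 = -γ := by simp [collMat, hj0, hj1, i1, hi10]
      rw [e0, e1, hz, if_neg hj0, if_pos hj1, add_zero]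
    · have hji0 : j ≠ i0 := fun h => hj0 (by simp [h, i0])
      have hji1 : j ≠ i1 := fun h => hj1 (by simp [h, i1])
      have e0 : collMat n i γ j i0 = 0 := by simp [collMat, hj0, hj1, hji0, i0]
      have e1 : collMat n i γ j i1 = 0 := by simp [collMat, hj0, hj1, hji1, i1]
      have hmem : j ∈ (Finset.univ.erase i0).erase i1 :=
        Finset.mem_erase.2 ⟨hji1, Finset.mem_erase.2 ⟨hji0, Finset.mem_univ j⟩⟩
      have hz : ∑ k ∈ (Finset.univ.erase i0).erase i1, (if j = k then 1 else 0) * y k = y j := by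
        rw [Finset.sum_congr rfl (fun k _ => by rw [ite_mul, one_mul, zero_mul])]
        rw [Finset.sum_ite_eq _ j y, if_pos hmem]
      rw [e0, e1, hz, if_neg hj0, if_neg hj1, zero_mul, zero_mul, zero_add, zero_add]

lemma collMat_transpose_mulVec {n i : ℕ} (hi : i + 1 < n) (γ : ℝ) (x : Fin n → ℝ) (j : Fin n) :
    ((collMat n i γ)ᵀ *ᵥ x) j =
      if j.val = i then γ * x ⟨i, Nat.lt_of_succ_lt hi⟩ + (1 + γ) * x ⟨i + 1, hi⟩
      else if j.val = i + 1 then (1 - γ) * x ⟨i, Nat.lt_of_succ_lt hi⟩ + (-γ) * x ⟨i + 1, hi⟩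
      else x j := by
  classical
  set i0 : Fin n := ⟨i, Nat.lt_of_succ_lt hi⟩
  set i1 : Fin n := ⟨i + 1, hi⟩
  have hne : i0 ≠ i1 := by simp [i0, i1, Fin.ext_iff]
  have hv : ∀ k : Fin n, k ≠ i0 → k ≠ i1 → (collMat n i γ)ᵀ j k * x k =
      (if k = j then 1 else 0) * x k := by
    intro k hk0 hk1
    have h0 : ¬ (k : ℕ) = i := fun h => hk0 (Fin.ext h)
    have h1 : ¬ (k : ℕ) = i + 1 := fun h => hk1 (Fin.ext h)
    simp [collMat, Matrix.transpose_apply, h0, h1]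
  have hsum : ((collMat n i γ)ᵀ *ᵥ x) j =
      (collMat n i γ)ᵀ j i0 * x i0 + (collMat n i γ)ᵀ j i1 * x i1 +
        ∑ k ∈ (Finset.univ.erase i0).erase i1, (if k = j then 1 else 0) * x k := by
    rw [mulVec, dotProduct,
      ← Finset.add_sum_erase _ _ (Finset.mem_univ i0),
      ← Finset.add_sum_erase _ _ (Finset.mem_erase.2 ⟨hne.symm, Finset.mem_univ i1⟩),
      ← add_assoc]
    congr 1
    refine Finset.sum_congr rfl fun k hk => ?_
    simp only [Finset.mem_erase] at hk
    exact hv k hk.2.1 hk.1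
  rw [hsum]
  have hi10 : ¬ (i + 1 = i) := Nat.succ_ne_self i
  by_cases hj0 : (j : ℕ) = i
  · have hz : ∑ k ∈ (Finset.univ.erase i0).erase i1, (if k = j then 1 else 0) * x k = 0 := by
      refine Finset.sum_eq_zero fun k hk => ?_
      simp only [Finset.mem_erase] at hk
      have hjk : k ≠ j := fun h => hk.2.1 (h.trans (Fin.ext hj0))
      simp [hjk]
    have e0 : (collMat n i γ)ᵀ j i0 = γ := by
      simp [collMat, Matrix.transpose_apply, hj0, i0]
    have e1 : (collMat n i γ)ᵀ j i1 = 1 + γ := by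
      simp [collMat, Matrix.transpose_apply, hj0, i1, hi10]
    rw [e0, e1, hz, if_pos hj0, add_zero]
  · by_cases hj1 : (j : ℕ) = i + 1
    · have hz : ∑ k ∈ (Finset.univ.erase i0).erase i1, (if k = j then 1 else 0) * x k = 0 := by
        refine Finset.sum_eq_zero fun k hk => ?_
        simp only [Finset.mem_erase] at hk
        have hjk : k ≠ j := fun h => hk.1 (h.trans (Fin.ext hj1))
        simp [hjk]
      have e0 : (collMat n i γ)ᵀ j i0 = 1 - γ := by
        simp [collMat, Matrix.transpose_apply, hj0, hj1, i0, hi10]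
      have e1 : (collMat n i γ)ᵀ j i1 = -γ := by
        simp [collMat, Matrix.transpose_apply, hj0, hj1, i1, hi10]
      rw [e0, e1, hz, if_neg hj0, if_pos hj1, add_zero]
    · have hji0 : j ≠ i0 := fun h => hj0 (by simp [h, i0])
      have hji1 : j ≠ i1 := fun h => hj1 (by simp [h, i1])
      have e0 : (collMat n i γ)ᵀ j i0 = 0 := by
        simp [collMat, Matrix.transpose_apply, hj0, hj1, i0, Ne.symm hji0, hi10]
      have e1 : (collMat n i γ)ᵀ j i1 = 0 := by
        simp [collMat, Matrix.transpose_apply, hj0, hj1, i1, Ne.symm hji1, hi10]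
      have hmem : j ∈ (Finset.univ.erase i0).erase i1 :=
        Finset.mem_erase.2 ⟨hji1, Finset.mem_erase.2 ⟨hji0, Finset.mem_univ j⟩⟩
      have hz : ∑ k ∈ (Finset.univ.erase i0).erase i1, (if k = j then 1 else 0) * x k = x j := by
        rw [Finset.sum_congr rfl (fun k _ => by rw [ite_mul, one_mul, zero_mul])]
        rw [Finset.sum_ite_eq' _ j x, if_pos hmem]
      rw [e0, e1, hz, if_neg hj0, if_neg hj1, zero_mul, zero_mul, zero_add, zero_add]

lemma collMat_dot {n i : ℕ} (hi : i + 1 < n) (γ : ℝ) (x y : Fin n → ℝ) :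
    ∑ j, ((collMat n i γ)ᵀ *ᵥ x) j * ((collMat n i γ) *ᵥ y) j = ∑ j, x j * y j := by
  set i0 : Fin n := ⟨i, Nat.lt_of_succ_lt hi⟩
  set i1 : Fin n := ⟨i + 1, hi⟩
  have hne : i0 ≠ i1 := by simp [i0, i1, Fin.ext_iff]
  refine sum_split i0 i1 hne _ _ ?_ ?_
  · rw [collMat_transpose_mulVec hi, collMat_transpose_mulVec hi,
        collMat_mulVec hi, collMat_mulVec hi]
    simp only [i0, i1, Nat.succ_ne_self, if_true, if_false, ite_true, ite_false, if_pos rfl,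
      if_neg (Nat.succ_ne_self i)]
    ring
  · intro j hj0 hj1
    have h0 : ¬ (j : ℕ) = i := fun h => hj0 (Fin.ext h)
    have h1 : ¬ (j : ℕ) = i + 1 := fun h => hj1 (Fin.ext h)
    rw [collMat_transpose_mulVec hi, collMat_mulVec hi, if_neg h0, if_neg h1,
        if_neg h0, if_neg h1]

lemma collMat_dot_eq {n i : ℕ} (hi : i + 1 < n) (γ : ℝ) (x q : Fin n → ℝ)
    (hq : q ⟨i, Nat.lt_of_succ_lt hi⟩ = q ⟨i + 1, hi⟩) :
    ∑ j, ((collMat n i γ)ᵀ *ᵥ x) j * q j = ∑ j, x j * q j := by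
  set i0 : Fin n := ⟨i, Nat.lt_of_succ_lt hi⟩
  set i1 : Fin n := ⟨i + 1, hi⟩
  have hne : i0 ≠ i1 := by simp [i0, i1, Fin.ext_iff]
  refine sum_split i0 i1 hne _ _ ?_ ?_
  · rw [collMat_transpose_mulVec hi, collMat_transpose_mulVec hi]
    simp only [i0, i1, Nat.succ_ne_self, if_true, if_false, ite_true, ite_false, if_pos rfl,
      if_neg (Nat.succ_ne_self i)]
    rw [hq]; ring
  · intro j hj0 hj1
    have h0 : ¬ (j : ℕ) = i := fun h => hj0 (Fin.ext h)
    have h1 : ¬ (j : ℕ) = i + 1 := fun h => hj1 (Fin.ext h)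
    rw [collMat_transpose_mulVec hi, if_neg h0, if_neg h1]

lemma collMat_energy {n i : ℕ} (hi : i + 1 < n) (m : Fin n → ℝ) (hm : ∀ j, 0 < m j)
    (x : Fin n → ℝ) :
    ∑ j, ((collMat n i ((m ⟨i, Nat.lt_of_succ_lt hi⟩ - m ⟨i + 1, hi⟩) /
        (m ⟨i, Nat.lt_of_succ_lt hi⟩ + m ⟨i + 1, hi⟩)))ᵀ *ᵥ x) j ^ 2 / m j
      = ∑ j, x j ^ 2 / m j := by
  set i0 : Fin n := ⟨i, Nat.lt_of_succ_lt hi⟩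
  set i1 : Fin n := ⟨i + 1, hi⟩
  have ha : 0 < m i0 := hm i0
  have hb : 0 < m i1 := hm i1
  have hab : m i0 + m i1 ≠ 0 := by positivity
  have hne : i0 ≠ i1 := by simp [i0, i1, Fin.ext_iff]
  refine sum_split i0 i1 hne _ _ ?_ ?_
  · rw [collMat_transpose_mulVec hi, collMat_transpose_mulVec hi]
    simp only [i0, i1, if_pos rfl, if_neg (Nat.succ_ne_self i)]
    show (_ * x i0 + _ * x i1) ^ 2 / m i0 + (_ * x i0 + _ * x i1) ^ 2 / m i1
        = x i0 ^ 2 / m i0 + x i1 ^ 2 / m i1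
    have hab' : m ⟨i, Nat.lt_of_succ_lt hi⟩ + m ⟨i + 1, hi⟩ ≠ 0 := hab
    field_simp
    ring
  · intro j hj0 hj1
    have h0 : ¬ (j : ℕ) = i := fun h => hj0 (Fin.ext h)
    have h1 : ¬ (j : ℕ) = i + 1 := fun h => hj1 (Fin.ext h)
    rw [collMat_transpose_mulVec hi, if_neg h0, if_neg h1]


/-- A neutral trajectory datum for the falling-ball system with `n ≥ 2` particles of
positive masses `m`: a strictly increasing sequence of collision times `0 < t_1 < t_2 < ⋯`
tending to `∞`, collision types `ty k ∈ {0, 1, …, n−1}` (where `ty k = 0` is a floor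
collision and `ty k = i + 1` is a collision of the 0-based particles `i` and `i + 1`),
a bound `C > 0`, and functions `q, v, δh : [0, ∞) → ℝⁿ` satisfying conditions
(a)–(f) of the paper.  The fields `vminus k`, `dhminus k` record the left limits
`v(t_k⁻)`, `δh(t_k⁻)`. -/
structure NeutralDatum (n : ℕ) (m : Fin n → ℝ) : Type where
  hn : 2 ≤ n
  hm : ∀ j, 0 < m j
  /-- collision times (0-indexed: `tc 0` is the paper's `t_1`) -/
  tc : ℕ → ℝ
  /-- collision types -/
  ty : ℕ → ℕ
  C : ℝ
  q : ℝ → Fin n → ℝ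
  v : ℝ → Fin n → ℝ
  dh : ℝ → Fin n → ℝ
  /-- the left limit `v(t_k⁻)` -/
  vminus : ℕ → Fin n → ℝ
  /-- the left limit `δh(t_k⁻)` -/
  dhminus : ℕ → Fin n → ℝ
  tc_pos : 0 < tc 0
  tc_mono : StrictMono tc
  tc_tendsto : Tendsto tc atTop atTop
  ty_lt : ∀ k, ty k < n
  C_pos : 0 < C
  /-- (a) `q` is continuous on `[0, ∞)` -/
  q_cont : ∀ j, ContinuousOn (fun t => q t j) (Ici 0)
  /-- (a) `0 ≤ q_j(t) ≤ C` -/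
  q_bdd : ∀ j, ∀ t, 0 ≤ t → 0 ≤ q t j ∧ q t j ≤ C
  /-- (b) between collisions, `q' = v` -/
  q_deriv : ∀ t, 0 ≤ t → t ∉ range tc → ∀ j,
    HasDerivWithinAt (fun s => q s j) (v t j) (Ici 0) t
  /-- (b) between collisions, `v' = -1` componentwise -/
  v_deriv : ∀ t, 0 ≤ t → t ∉ range tc → ∀ j,
    HasDerivWithinAt (fun s => v s j) (-1) (Ici 0) t
  /-- (b) between collisions, `δh` is constant -/
  dh_deriv : ∀ t, 0 ≤ t → t ∉ range tc → ∀ j,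
    HasDerivWithinAt (fun s => dh s j) 0 (Ici 0) t
  /-- (c) `v` is right-continuous -/
  v_rc : ∀ t, 0 ≤ t → ∀ j, Tendsto (fun s => v s j) (nhdsWithin t (Ici t)) (nhds (v t j))
  /-- (c) `δh` is right-continuous -/
  dh_rc : ∀ t, 0 ≤ t → ∀ j, Tendsto (fun s => dh s j) (nhdsWithin t (Ici t)) (nhds (dh t j))
  /-- (c) `v` has left limit `vminus k` at `tc k` -/
  v_ll : ∀ k j, Tendsto (fun s => v s j) (nhdsWithin (tc k) (Iio (tc k))) (nhds (vminus k j))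
  /-- (c) `δh` has left limit `dhminus k` at `tc k` -/
  dh_ll : ∀ k j, Tendsto (fun s => dh s j) (nhdsWithin (tc k) (Iio (tc k))) (nhds (dhminus k j))
  /-- (d) collision of particles `i`, `i+1` (0-based): `q_i = q_{i+1}`,
  `v⁺ = R_i v⁻` and `δh⁺ = R_iᵀ δh⁻` -/
  coll_pair : ∀ k, ∀ i : ℕ, ∀ hi : i + 1 < n, ty k = i + 1 →
    q (tc k) ⟨i, Nat.lt_of_succ_lt hi⟩ = q (tc k) ⟨i + 1, hi⟩ ∧
    v (tc k) = (collMat n i ((m ⟨i, Nat.lt_of_succ_lt hi⟩ - m ⟨i + 1, hi⟩) /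
        (m ⟨i, Nat.lt_of_succ_lt hi⟩ + m ⟨i + 1, hi⟩))) *ᵥ vminus k ∧
    dh (tc k) = (collMat n i ((m ⟨i, Nat.lt_of_succ_lt hi⟩ - m ⟨i + 1, hi⟩) /
        (m ⟨i, Nat.lt_of_succ_lt hi⟩ + m ⟨i + 1, hi⟩)))ᵀ *ᵥ dhminus k
  /-- (e) floor collision: `q_1 = 0`, `v_1⁺ = -v_1⁻`, the other velocities are
  unchanged, `δh⁺ = δh⁻` and `δh_1 = 0` -/
  coll_floor : ∀ k, ty k = 0 →
    q (tc k) ⟨0, by omega⟩ = 0 ∧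
    v (tc k) ⟨0, by omega⟩ = -vminus k ⟨0, by omega⟩ ∧
    (∀ j : Fin n, j ≠ ⟨0, by omega⟩ → v (tc k) j = vminus k j) ∧
    dh (tc k) = dhminus k ∧
    dh (tc k) ⟨0, by omega⟩ = 0
  /-- (f) `∑ j, δh_j(t) = 0` -/
  dh_sum : ∀ t, 0 ≤ t → ∑ j, dh t j = 0

namespace NeutralDatum
variable {n : ℕ} {m : Fin n → ℝ} (D : NeutralDatum n m)

lemma tc_pos' (k : ℕ) : 0 < D.tc k :=
  lt_of_lt_of_le D.tc_pos (D.tc_mono.monotone (Nat.zero_le k))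

/-- a function continuous from the right, with left limits equal to its values at
collision times, and zero derivative off collisions, is constant on `[0, ∞)`. -/
lemma datum_const (f : ℝ → ℝ)
    (hderiv : ∀ t, 0 ≤ t → t ∉ range D.tc → HasDerivWithinAt f 0 (Ici 0) t)
    (hrc : ∀ t, 0 ≤ t → Tendsto f (nhdsWithin t (Ici t)) (nhds (f t)))
    (hll : ∀ k, Tendsto f (nhdsWithin (D.tc k) (Iio (D.tc k))) (nhds (f (D.tc k)))) :
    ∀ t, 0 ≤ t → f t = f 0 := by
  have hcont : ContinuousOn f (Ici 0) := by
    intro t ht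
    by_cases h : t ∈ range D.tc
    · obtain ⟨k, rfl⟩ := h
      have h1 : Tendsto f (nhds (D.tc k)) (nhds (f (D.tc k))) := by
        rw [← nhdsLT_sup_nhdsGE (D.tc k)]
        rw [tendsto_sup]
        exact ⟨hll k, hrc _ (D.tc_pos' k).le⟩
      exact ContinuousAt.continuousWithinAt h1
    · exact (hderiv t ht h).continuousWithinAt
  have key : ∀ a b : ℝ, 0 ≤ a → a ≤ b → (∀ x ∈ Ico a b, x ∉ range D.tc) → f b = f a := by
    intro a b ha hab hfree
    refine constant_of_has_deriv_right_zero
      (hcont.mono (fun x hx => le_trans ha hx.1)) (fun x hx => ?_) b (right_mem_Icc.2 hab)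
    exact (hderiv x (le_trans ha hx.1) (hfree x hx)).mono (Ici_subset_Ici.2 (le_trans ha hx.1))
  have step : ∀ c b : ℝ, 0 ≤ c → c < b → (∀ x ∈ Ioo c b, x ∉ range D.tc) → f b = f c := by
    intro c b hc hcb hfree
    have h1 : ∀ a ∈ Ioo c b, f b = f a := by
      intro a ha
      refine key a b (le_of_lt (lt_of_le_of_lt hc ha.1)) ha.2.le (fun x hx => ?_)
      exact hfree x ⟨lt_of_lt_of_le ha.1 hx.1, hx.2⟩
    have h2 : Tendsto f (nhdsWithin c (Ioi c)) (nhds (f c)) :=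
      (hrc c hc).mono_left (nhdsWithin_mono _ Ioi_subset_Ici_self)
    have h3 : f =ᶠ[nhdsWithin c (Ioi c)] fun _ => f b := by
      filter_upwards [Ioo_mem_nhdsGT_of_mem ⟨le_refl c, hcb⟩] with a ha using (h1 a ha).symm
    have h4 : Tendsto f (nhdsWithin c (Ioi c)) (nhds (f b)) :=
      Tendsto.congr' h3.symm tendsto_const_nhds
    exact tendsto_nhds_unique h4 h2
  have freeIoo : ∀ k, ∀ x ∈ Ioo (D.tc k) (D.tc (k + 1)), x ∉ range D.tc := by
    rintro k x hx ⟨j, rfl⟩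
    rcases le_or_gt j k with h | h
    · exact absurd (D.tc_mono.monotone h) (not_le.2 hx.1)
    · exact absurd (D.tc_mono.monotone h) (not_le.2 hx.2)
  have base : ∀ t, 0 ≤ t → t ≤ D.tc 0 → f t = f 0 := by
    intro t ht ht'
    refine key 0 t le_rfl ht (fun x hx => ?_)
    rintro ⟨j, rfl⟩
    exact absurd (D.tc_mono.monotone (Nat.zero_le j)) (not_le.2 (lt_of_lt_of_le hx.2 ht'))
  have indstep : ∀ k, (∀ t, 0 ≤ t → t ≤ D.tc k → f t = f 0) →
      ∀ t, 0 ≤ t → t ≤ D.tc (k + 1) → f t = f 0 := by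
    intro k ih t ht ht'
    rcases le_or_gt t (D.tc k) with h | h
    · exact ih t ht h
    · have h1 : f t = f (D.tc k) := by
        refine step (D.tc k) t (D.tc_pos' k).le h (fun x hx => ?_)
        exact freeIoo k x ⟨hx.1, lt_of_lt_of_le hx.2 ht'⟩
      rw [h1]
      exact ih (D.tc k) (D.tc_pos' k).le le_rfl
  have main : ∀ k, ∀ t, 0 ≤ t → t ≤ D.tc k → f t = f 0 := by
    intro k
    induction k with
    | zero => exact fun t ht ht' => base t ht ht'
    | succ k ih => exact indstep k ih
  intro t ht
  obtain ⟨k, hk⟩ := (D.tc_tendsto.eventually_ge_atTop t).exists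
  exact main k t ht hk


lemma E_jump (k : ℕ) :
    ∑ j, D.dh (D.tc k) j * D.v (D.tc k) j = ∑ j, D.dhminus k j * D.vminus k j := by
  have h0n : 0 < n := lt_of_lt_of_le two_pos D.hn
  cases hty : D.ty k with
  | zero =>
    obtain ⟨hq0, hv0, hvj, hdh, hdh0⟩ := D.coll_floor k hty
    refine Finset.sum_congr rfl fun j _ => ?_
    by_cases hj : j = (⟨0, h0n⟩ : Fin n)
    · subst hj
      rw [show D.dh (D.tc k) ⟨0, h0n⟩ = 0 from hdh0, zero_mul,
        show D.dhminus k ⟨0, h0n⟩ = 0 from (congrFun hdh _).symm.trans hdh0, zero_mul]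
    · rw [congrFun hdh j, hvj j hj]
  | succ i =>
    have hi : i + 1 < n := hty ▸ D.ty_lt k
    obtain ⟨hq, hv, hdh⟩ := D.coll_pair k i hi hty
    rw [hv, hdh]
    exact collMat_dot hi _ _ _

lemma Dq_jump (k : ℕ) :
    ∑ j, D.dh (D.tc k) j * D.q (D.tc k) j = ∑ j, D.dhminus k j * D.q (D.tc k) j := by
  cases hty : D.ty k with
  | zero =>
    obtain ⟨hq0, hv0, hvj, hdh, hdh0⟩ := D.coll_floor k hty
    exact Finset.sum_congr rfl fun j _ => by rw [congrFun hdh j]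
  | succ i =>
    have hi : i + 1 < n := hty ▸ D.ty_lt k
    obtain ⟨hq, hv, hdh⟩ := D.coll_pair k i hi hty
    rw [hdh]
    exact collMat_dot_eq hi _ _ _ hq

lemma W_jump (k : ℕ) :
    ∑ j, D.dh (D.tc k) j ^ 2 / m j = ∑ j, D.dhminus k j ^ 2 / m j := by
  cases hty : D.ty k with
  | zero =>
    obtain ⟨hq0, hv0, hvj, hdh, hdh0⟩ := D.coll_floor k hty
    exact Finset.sum_congr rfl fun j _ => by rw [congrFun hdh j]
  | succ i =>
    have hi : i + 1 < n := hty ▸ D.ty_lt k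
    obtain ⟨hq, hv, hdh⟩ := D.coll_pair k i hi hty
    rw [hdh]
    exact collMat_energy hi m D.hm _

lemma nhdsLT_le (t : ℝ) (ht : 0 < t) : nhdsWithin t (Iio t) ≤ nhdsWithin t (Ici (0 : ℝ)) :=
  nhdsWithin_le_iff.2 (mem_nhdsWithin_of_mem_nhds (Ici_mem_nhds ht))

end NeutralDatum

/-- Lemma 3.6: given a neutral trajectory datum,
`∑ j, δh_j(t) v_j(t) = 0` for every `t ≥ 0`; in particular
`∑ j, δh_j(0) v_j(0) = 0`. -/
theorem neutral_slope_zero (n : ℕ) (m : Fin n → ℝ) (D : NeutralDatum n m) :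
    (∀ t : ℝ, 0 ≤ t → ∑ j, D.dh t j * D.v t j = 0) ∧
      ∑ j, D.dh 0 j * D.v 0 j = 0 := by
  classical
  -- E := ∑ δh v is constant
  have hEd : ∀ t, 0 ≤ t → t ∉ range D.tc →
      HasDerivWithinAt (fun s => ∑ j, D.dh s j * D.v s j) 0 (Ici 0) t := by
    intro t ht hmem
    have h := HasDerivWithinAt.fun_sum
      (fun j (_ : j ∈ Finset.univ) => (D.dh_deriv t ht hmem j).mul (D.v_deriv t ht hmem j))
    have e : ∑ j : Fin n, (0 * D.v t j + D.dh t j * (-1)) = 0 := by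
      simp only [zero_mul, zero_add, mul_neg_one]
      rw [Finset.sum_neg_distrib, D.dh_sum t ht, neg_zero]
    rw [e] at h
    exact h
  have hErc : ∀ t, 0 ≤ t → Tendsto (fun s => ∑ j, D.dh s j * D.v s j)
      (nhdsWithin t (Ici t)) (nhds (∑ j, D.dh t j * D.v t j)) :=
    fun t ht => tendsto_finset_sum _ fun j _ => (D.dh_rc t ht j).mul (D.v_rc t ht j)
  have hEll : ∀ k, Tendsto (fun s => ∑ j, D.dh s j * D.v s j)
      (nhdsWithin (D.tc k) (Iio (D.tc k))) (nhds (∑ j, D.dh (D.tc k) j * D.v (D.tc k) j)) := by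
    intro k
    rw [D.E_jump k]
    exact tendsto_finset_sum _ fun j _ => (D.dh_ll k j).mul (D.v_ll k j)
  have hE : ∀ t, 0 ≤ t → (∑ j, D.dh t j * D.v t j) = ∑ j, D.dh 0 j * D.v 0 j :=
    D.datum_const _ hEd hErc hEll
  set c : ℝ := ∑ j, D.dh 0 j * D.v 0 j with hcdef
  -- W := ∑ δh² / m is constant
  have hWd : ∀ t, 0 ≤ t → t ∉ range D.tc →
      HasDerivWithinAt (fun s => ∑ j, D.dh s j ^ 2 / m j) 0 (Ici 0) t := by
    intro t ht hmem
    have h := HasDerivWithinAt.fun_sum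
      (fun j (_ : j ∈ Finset.univ) => ((D.dh_deriv t ht hmem j).fun_pow 2).div_const (m j))
    simp only [mul_zero, zero_div, Finset.sum_const_zero] at h
    exact h
  have hWrc : ∀ t, 0 ≤ t → Tendsto (fun s => ∑ j, D.dh s j ^ 2 / m j)
      (nhdsWithin t (Ici t)) (nhds (∑ j, D.dh t j ^ 2 / m j)) :=
    fun t ht => tendsto_finset_sum _ fun j _ => ((D.dh_rc t ht j).pow 2).div_const (m j)
  have hWll : ∀ k, Tendsto (fun s => ∑ j, D.dh s j ^ 2 / m j)
      (nhdsWithin (D.tc k) (Iio (D.tc k))) (nhds (∑ j, D.dh (D.tc k) j ^ 2 / m j)) := by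
    intro k
    rw [D.W_jump k]
    exact tendsto_finset_sum _ fun j _ => ((D.dh_ll k j).pow 2).div_const (m j)
  have hW : ∀ t, 0 ≤ t → (∑ j, D.dh t j ^ 2 / m j) = ∑ j, D.dh 0 j ^ 2 / m j :=
    D.datum_const _ hWd hWrc hWll
  -- g := ∑ δh q − c t is constant
  have hq_rc : ∀ t, 0 ≤ t → ∀ j, Tendsto (fun s => D.q s j)
      (nhdsWithin t (Ici t)) (nhds (D.q t j)) :=
    fun t ht j => Filter.Tendsto.mono_left (D.q_cont j t ht)
      (nhdsWithin_mono t (Ici_subset_Ici.2 ht))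
  have hq_ll : ∀ k, ∀ j, Tendsto (fun s => D.q s j)
      (nhdsWithin (D.tc k) (Iio (D.tc k))) (nhds (D.q (D.tc k) j)) :=
    fun k j => Filter.Tendsto.mono_left (D.q_cont j (D.tc k) (D.tc_pos' k).le)
      (NeutralDatum.nhdsLT_le (D.tc k) (D.tc_pos' k))
  have hgd : ∀ t, 0 ≤ t → t ∉ range D.tc →
      HasDerivWithinAt (fun s => (∑ j, D.dh s j * D.q s j) - c * s) 0 (Ici 0) t := by
    intro t ht hmem
    have h1 := HasDerivWithinAt.fun_sum
      (fun j (_ : j ∈ Finset.univ) => (D.dh_deriv t ht hmem j).mul (D.q_deriv t ht hmem j))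
    have h2 : HasDerivWithinAt (fun s : ℝ => c * s) c (Ici 0) t := by
      simpa using (hasDerivWithinAt_id t (Ici (0 : ℝ))).const_mul c
    have h := h1.sub h2
    have e : (∑ j : Fin n, (0 * D.q t j + D.dh t j * D.v t j)) - c = 0 := by
      simp only [zero_mul, zero_add]
      rw [hE t ht, sub_self]
    rw [e] at h
    exact h
  have hgrc : ∀ t, 0 ≤ t → Tendsto (fun s => (∑ j, D.dh s j * D.q s j) - c * s)
      (nhdsWithin t (Ici t)) (nhds ((∑ j, D.dh t j * D.q t j) - c * t)) := by
    intro t ht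
    exact (tendsto_finset_sum _ fun j _ => (D.dh_rc t ht j).mul (hq_rc t ht j)).sub
      (((continuous_const.mul continuous_id).tendsto t).mono_left nhdsWithin_le_nhds)
  have hgll : ∀ k, Tendsto (fun s => (∑ j, D.dh s j * D.q s j) - c * s)
      (nhdsWithin (D.tc k) (Iio (D.tc k)))
      (nhds ((∑ j, D.dh (D.tc k) j * D.q (D.tc k) j) - c * D.tc k)) := by
    intro k
    rw [D.Dq_jump k]
    exact (tendsto_finset_sum _ fun j _ => (D.dh_ll k j).mul (hq_ll k j)).sub
      (((continuous_const.mul continuous_id).tendsto (D.tc k)).mono_left nhdsWithin_le_nhds)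
  have hg : ∀ t, 0 ≤ t → ((∑ j, D.dh t j * D.q t j) - c * t)
      = (∑ j, D.dh 0 j * D.q 0 j) - c * 0 :=
    D.datum_const _ hgd hgrc hgll
  -- bound on ∑ δh q
  set w0 : ℝ := ∑ j, D.dh 0 j ^ 2 / m j with hw0def
  have hdh_bound : ∀ t, 0 ≤ t → ∀ j, |D.dh t j| ≤ Real.sqrt (m j * w0) := by
    intro t ht j
    have h1 : D.dh t j ^ 2 / m j ≤ w0 := by
      rw [← hW t ht]
      exact Finset.single_le_sum (fun j _ => div_nonneg (sq_nonneg _) (D.hm j).le)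
        (Finset.mem_univ j)
    have h2 : D.dh t j ^ 2 ≤ m j * w0 := by
      rw [div_le_iff₀ (D.hm j)] at h1
      linarith
    calc |D.dh t j| = Real.sqrt (D.dh t j ^ 2) := (Real.sqrt_sq_eq_abs _).symm
      _ ≤ Real.sqrt (m j * w0) := Real.sqrt_le_sqrt h2
  set K : ℝ := D.C * ∑ j, Real.sqrt (m j * w0) with hKdef
  have hK : 0 ≤ K :=
    mul_nonneg D.C_pos.le (Finset.sum_nonneg fun j _ => Real.sqrt_nonneg _)
  have hB : ∀ t, 0 ≤ t → |∑ j, D.dh t j * D.q t j| ≤ K := by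
    intro t ht
    calc |∑ j, D.dh t j * D.q t j| ≤ ∑ j, |D.dh t j * D.q t j| :=
          Finset.abs_sum_le_sum_abs _ _
      _ ≤ ∑ j, Real.sqrt (m j * w0) * D.C := by
          refine Finset.sum_le_sum fun j _ => ?_
          rw [abs_mul]
          have hq := D.q_bdd j t ht
          have hqj : |D.q t j| ≤ D.C := by rw [abs_of_nonneg hq.1]; exact hq.2
          exact mul_le_mul (hdh_bound t ht j) hqj (abs_nonneg _) (Real.sqrt_nonneg _)
      _ = K := by rw [← Finset.sum_mul, mul_comm]
  -- conclude c = 0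
  have hc0 : c = 0 := by
    by_contra hne
    have hpos : 0 < |c| := abs_pos.2 hne
    set t : ℝ := (2 * K + 1) / |c| with htdef
    have ht : 0 ≤ t := div_nonneg (by linarith) hpos.le
    have hct : c * t = (∑ j, D.dh t j * D.q t j) - (∑ j, D.dh 0 j * D.q 0 j) := by
      have := hg t ht
      linarith
    have h1 : |c * t| ≤ 2 * K := by
      rw [hct, sub_eq_add_neg]
      calc |(∑ j, D.dh t j * D.q t j) + -(∑ j, D.dh 0 j * D.q 0 j)|
          ≤ |∑ j, D.dh t j * D.q t j| + |-(∑ j, D.dh 0 j * D.q 0 j)| := abs_add_le _ _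
        _ ≤ K + K := by rw [abs_neg]; exact add_le_add (hB t ht) (hB 0 le_rfl)
        _ = 2 * K := by ring
    have h2 : |c * t| = 2 * K + 1 := by
      rw [abs_mul, abs_of_nonneg ht, htdef, mul_div_cancel₀ _ hpos.ne']
    linarith
  exact ⟨fun t ht => by rw [hE t ht, hc0], by rw [hcdef] at hc0; exact hc0⟩
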